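/- Let G be a finite cubic simple graph and let A be a MAI set of G. Then B = V(G) \ A is an AI set of G, i.e., the subgraph induced by B has maximum degree at most 1. -/

import Mathlib

/-- A set of vertices is independent if its vertices are pairwise nonadjacent. -/
def IsIndep {V : Type*} (G : SimpleGraph V) (s : Set V) : Prop :=
  s.Pairwise fun u v => ¬ G.Adj u v

/-- The independence number of a graph: the largest size of an independent set. -/
noncomputable def indepNum {V : Type*} (G : SimpleGraph V) : ℕ :=
  sSup {n | ∃ s : Set V, IsIndep G s ∧ s.ncard = n}

/-- A graph is cubic (3-regular) if every vertex has exactly three neighbors. -/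
def IsCubic {V : Type*} (G : SimpleGraph V) : Prop :=
  ∀ v : V, (G.neighborSet v).ncard = 3

/-- `A` is an AI set (almost independent set) if the subgraph induced by `A` has maximum
degree at most 1, i.e. every vertex of `A` has at most one neighbor inside `A`. -/
def IsAI {V : Type*} (G : SimpleGraph V) (A : Set V) : Prop :=
  ∀ a ∈ A, ({b | b ∈ A ∧ G.Adj a b}).ncard ≤ 1

/-- `A` is a MAI set (maximum almost independent set) if `A` is an AI set containing an
independent set of maximum size `α(G)`, and `A` is largest among such sets. -/
def IsMAI {V : Type*} (G : SimpleGraph V) (A : Set V) : Prop :=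
  IsAI G A ∧ (∃ s ⊆ A, IsIndep G s ∧ s.ncard = indepNum G) ∧
    ∀ A' : Set V, IsAI G A' → (∃ s ⊆ A', IsIndep G s ∧ s.ncard = indepNum G) →
      A'.ncard ≤ A.ncard

/-- if `A` is a MAI set of a finite cubic simple graph `G`, then the complement
`B = V(G) \ A` is an AI set of `G`. -/
theorem compl_of_MAI_is_AI {V : Type*} [Fintype V] (G : SimpleGraph V)
    (hcubic : IsCubic G) (A : Set V) (hA : IsMAI G A) :
    IsAI G Aᶜ := by
  classical
  obtain ⟨hAI, ⟨s, hsA, hs_ind, hs_card⟩, hmax⟩ := hA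
  have hbdd : BddAbove {n | ∃ t : Set V, IsIndep G t ∧ t.ncard = n} := by
    refine ⟨Fintype.card V, ?_⟩
    rintro n ⟨t, -, rfl⟩
    calc t.ncard ≤ (Set.univ : Set V).ncard :=
          Set.ncard_le_ncard (Set.subset_univ t) Set.finite_univ
      _ = Fintype.card V := by simp [Set.ncard_univ]
  have key : ∀ t : Set V, IsIndep G t → t.ncard ≤ indepNum G := fun t ht =>
    le_csSup hbdd ⟨t, ht, rfl⟩
  intro b hb
  by_contra hdeg
  push_neg at hdeg
  have hbA : b ∉ A := hb
  -- b has at most one neighbor in A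
  have hsplit : ({z | z ∈ A ∧ G.Adj b z}).ncard + ({z | z ∈ Aᶜ ∧ G.Adj b z}).ncard = 3 := by
    rw [← Set.ncard_union_eq ?disj (Set.toFinite _) (Set.toFinite _), ← hcubic b]
    · congr 1
      ext z
      simp only [Set.mem_union, Set.mem_setOf_eq, SimpleGraph.mem_neighborSet,
        Set.mem_compl_iff]
      tauto
    case disj =>
      rw [Set.disjoint_left]
      rintro z ⟨hz, -⟩ ⟨hz', -⟩
      exact hz' hz
  have hNA : ({z | z ∈ A ∧ G.Adj b z}).ncard ≤ 1 := by omega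
  by_cases hcase : ∃ a ∈ s, G.Adj b a
  · obtain ⟨a, ha_s, hadj⟩ := hcase
    have haA : a ∈ A := hsA ha_s
    have uniq_b : ∀ z ∈ A, G.Adj b z → z = a := by
      intro z hz hbz
      exact (Set.ncard_le_one_iff (Set.toFinite _)).mp hNA
        (show z ∈ {z | z ∈ A ∧ G.Adj b z} from ⟨hz, hbz⟩) ⟨haA, hadj⟩
    by_cases hcase2 : ∃ a' ∈ A, G.Adj a a'
    · -- a is matched inside A; swap to get a bigger independent set
      obtain ⟨a', ha'A, hadj'⟩ := hcase2
      have hane : a ≠ a' := G.ne_of_adj hadj'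
      have ha'ns : a' ∉ s := by
        intro h
        exact hs_ind ha_s h hane hadj'
      have hba' : b ≠ a' := fun h => hbA (h ▸ ha'A)
      have hnadj_ba' : ¬ G.Adj b a' := fun h => hane (uniq_b a' ha'A h).symm
      have uniq_a' : ∀ z ∈ A, G.Adj a' z → z = a := by
        intro z hz hz'
        exact (Set.ncard_le_one_iff (Set.toFinite _)).mp (hAI a' ha'A)
          (show z ∈ {z | z ∈ A ∧ G.Adj a' z} from ⟨hz, hz'⟩) ⟨haA, hadj'.symm⟩
      set t : Set V := insert a' (insert b (s \ {a})) with ht_def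
      have hbns : b ∉ s \ {a} := fun h => hbA (hsA h.1)
      have ha'nt : a' ∉ insert b (s \ {a}) := by
        simp only [Set.mem_insert_iff, Set.mem_diff, Set.mem_singleton_iff]
        rintro (h | ⟨h, -⟩)
        · exact hba' h.symm
        · exact ha'ns h
      have ht_ind : IsIndep G t := by
        rw [ht_def, IsIndep, Set.pairwise_insert, Set.pairwise_insert]
        refine ⟨⟨hs_ind.mono Set.diff_subset, ?_⟩, ?_⟩
        · intro u hu _
          have hnbu : ¬ G.Adj b u := fun h => hu.2 (uniq_b u (hsA hu.1) h)
          exact ⟨hnbu, fun h => hnbu h.symm⟩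
        · intro u hu _
          rcases hu with h | h
          · subst h
            exact ⟨fun h => hnadj_ba' h.symm, hnadj_ba'⟩
          · have hnau : ¬ G.Adj a' u := fun hadj2 => h.2 (uniq_a' u (hsA h.1) hadj2)
            exact ⟨hnau, fun hh => hnau hh.symm⟩
      have ht_card : t.ncard = s.ncard + 1 := by
        rw [ht_def, Set.ncard_insert_of_notMem ha'nt (Set.toFinite _),
          Set.ncard_insert_of_notMem hbns (Set.toFinite _),
          Set.ncard_diff_singleton_of_mem ha_s]
        have : 1 ≤ s.ncard := (Set.ncard_pos (Set.toFinite _)).mpr ⟨a, ha_s⟩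
        omega
      have := key t ht_ind
      omega
    · -- a has no neighbor in A; A ∪ {b} is a bigger AI set
      push_neg at hcase2
      have hAI' : IsAI G (insert b A) := by
        intro v hv
        rcases hv with hv | hv
        · rw [hv]
          have : {z | z ∈ insert b A ∧ G.Adj b z} = {a} := by
            ext z
            simp only [Set.mem_setOf_eq, Set.mem_insert_iff, Set.mem_singleton_iff]
            constructor
            · rintro ⟨h | h, hadj2⟩
              · exact absurd (h ▸ hadj2) (G.irrefl)
              · exact uniq_b z h hadj2

            · rintro rfl
              exact ⟨Or.inr haA, hadj⟩
          rw [this]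
          simp
        · by_cases hva : v = a
          · subst hva
            have : {z | z ∈ insert b A ∧ G.Adj v z} = {b} := by
              ext z
              simp only [Set.mem_setOf_eq, Set.mem_insert_iff, Set.mem_singleton_iff]
              constructor
              · rintro ⟨h | h, hadj2⟩
                · exact h
                · exact absurd hadj2 (hcase2 z h)
              · rintro rfl
                exact ⟨Or.inl rfl, hadj.symm⟩
            rw [this]
            simp
          · have : {z | z ∈ insert b A ∧ G.Adj v z} = {z | z ∈ A ∧ G.Adj v z} := by
              ext z
              simp only [Set.mem_setOf_eq, Set.mem_insert_iff]
              constructor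
              · rintro ⟨h | h, hadj2⟩
                · exact absurd (uniq_b v hv (h ▸ hadj2.symm)) hva
                · exact ⟨h, hadj2⟩
              · rintro ⟨h, hadj2⟩
                exact ⟨Or.inr h, hadj2⟩
            rw [this]
            exact hAI v hv
      have hle := hmax (insert b A) hAI'
        ⟨s, hsA.trans (Set.subset_insert b A), hs_ind, hs_card⟩
      rw [Set.ncard_insert_of_notMem hbA (Set.toFinite _)] at hle
      omega
  · -- no neighbor of b in s: s ∪ {b} is a bigger independent set
    push_neg at hcase
    have hbns : b ∉ s := fun h => hbA (hsA h)
    have ht_ind : IsIndep G (insert b s) := by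
      rw [IsIndep, Set.pairwise_insert]
      refine ⟨hs_ind, fun u hu _ => ⟨hcase u hu, fun h => hcase u hu h.symm⟩⟩
    have := key _ ht_ind
    rw [Set.ncard_insert_of_notMem hbns (Set.toFinite _)] at this
    omega
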